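/- Let F₁ ⊆ G₁ and F₂ ⊆ G₂ be filters of a finite lattice L. Then the dominance relation mvt(F₁,G₁) ≼ mvt(F₂,G₂) holds (i.e. w(F₁)/w(G₁) ≤ w(F₂)/w(G₂) for every strictly positive w : L → ℝ) if and only if either F₂ = G₂, or both F₁ ⊆ F₂ and G₂∖F₂ ⊆ G₁. (This is the explicit form of the statement that the partial order on matching value terms is the reflexive–transitive closure of the three elementary operations: adding an element of G∖F to the numerator set F, removing an element not in F from the denominator set G, and adding a new element to both F and G.) -/

import Mathlib

open Finset

/-- A filter of a lattice: a nonempty, upward-closed subset. -/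
def IsFilter {L : Type*} [Lattice L] (F : Finset L) : Prop :=
  F.Nonempty ∧ ∀ c ∈ F, ∀ c', c ≤ c' → c' ∈ F

/-- The dominance order on matching value terms: mvt(F₁,G₁) ≼ mvt(F₂,G₂) iff
w(F₁)/w(G₁) ≤ w(F₂)/w(G₂) for every strictly positive weight function w. -/
def MvtLe {L : Type*} (F₁ G₁ F₂ G₂ : Finset L) : Prop :=
  ∀ w : L → ℝ, (∀ c : L, 0 < w c) →
    (∑ c ∈ F₁, w c) / (∑ c ∈ G₁, w c) ≤ (∑ c ∈ F₂, w c) / (∑ c ∈ G₂, w c)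

lemma sum_one_add_ite {L : Type*} [DecidableEq L] (x : L) (m : ℝ) (S : Finset L) :
    ∑ c ∈ S, (1 + if c = x then m else 0) = (S.card : ℝ) + if x ∈ S then m else 0 := by
  rw [Finset.sum_add_distrib, Finset.sum_const, Finset.sum_ite_eq' S x (fun _ => m)]
  simp

/-- for filters F₁ ⊆ G₁ and F₂ ⊆ G₂, dominance mvt(F₁,G₁) ≼ mvt(F₂,G₂)
holds iff either F₂ = G₂, or both F₁ ⊆ F₂ and G₂∖F₂ ⊆ G₁. -/
theorem stmt7 {L : Type*} [Lattice L] [Fintype L] [DecidableEq L]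
    (F₁ G₁ F₂ G₂ : Finset L)
    (hF₁ : IsFilter F₁) (hG₁ : IsFilter G₁) (hF₂ : IsFilter F₂) (hG₂ : IsFilter G₂)
    (h₁ : F₁ ⊆ G₁) (h₂ : F₂ ⊆ G₂) :
    MvtLe F₁ G₁ F₂ G₂ ↔ (F₂ = G₂ ∨ (F₁ ⊆ F₂ ∧ G₂ \ F₂ ⊆ G₁)) := by
  have hn₁ : (1 : ℝ) ≤ F₁.card := by
    exact_mod_cast Finset.card_pos.mpr hF₁.1
  have hg₁ : (1 : ℝ) ≤ G₁.card := by
    exact_mod_cast Finset.card_pos.mpr hG₁.1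
  have hn₂ : (1 : ℝ) ≤ F₂.card := by
    exact_mod_cast Finset.card_pos.mpr hF₂.1
  have hg₂ : (1 : ℝ) ≤ G₂.card := by
    exact_mod_cast Finset.card_pos.mpr hG₂.1
  constructor
  · intro h
    by_cases hne : F₂ = G₂
    · exact Or.inl hne
    right
    have hlt : F₂ ⊂ G₂ := ssubset_of_subset_of_ne h₂ hne
    have hcard : (F₂.card : ℝ) + 1 ≤ G₂.card := by
      exact_mod_cast Finset.card_lt_card hlt
    constructor
    · -- F₁ ⊆ F₂
      intro c hc
      by_contra hcF₂
      set M : ℝ := ((G₁.card : ℝ) + 1) * ((G₂.card : ℝ) + 1) + F₂.card + 1 with hM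
      have hn2g1 : (F₂.card : ℝ) * G₁.card < M := by nlinarith
      have hM1 : (1 : ℝ) ≤ M := by nlinarith
      have hMpos : (0 : ℝ) < M := by linarith
      have hw := h (fun c' => 1 + if c' = c then M else 0)
        (fun c' => by split_ifs <;> linarith)
      simp only [sum_one_add_ite] at hw
      rw [if_pos hc, if_pos (h₁ hc), if_neg hcF₂] at hw
      by_cases hcG₂ : c ∈ G₂
      · rw [if_pos hcG₂] at hw
        rw [div_le_div_iff₀ (by linarith) (by linarith)] at hw
        nlinarith [mul_le_mul_of_nonneg_left hcard hMpos.le,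
          mul_nonneg (by linarith : (0:ℝ) ≤ (F₁.card : ℝ)) hMpos.le,
          mul_nonneg (by linarith : (0:ℝ) ≤ (F₁.card : ℝ)) (by linarith : (0:ℝ) ≤ (G₂.card : ℝ))]
      · rw [if_neg hcG₂] at hw
        rw [div_le_div_iff₀ (by linarith) (by linarith)] at hw
        nlinarith [mul_le_mul_of_nonneg_right (by linarith : (F₂.card : ℝ) ≤ (G₂.card : ℝ) - 1) hMpos.le,
          mul_nonneg (by linarith : (0:ℝ) ≤ (F₁.card : ℝ)) (by linarith : (0:ℝ) ≤ (G₂.card : ℝ))]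
    · -- G₂ \ F₂ ⊆ G₁
      intro x hx
      rw [Finset.mem_sdiff] at hx
      by_contra hxG₁
      have hxF₁ : x ∉ F₁ := fun hxF₁ => hxG₁ (h₁ hxF₁)
      set M : ℝ := (F₂.card : ℝ) * G₁.card + 1 with hM
      have hMpos : (0 : ℝ) < M := by nlinarith
      have hw := h (fun c' => 1 + if c' = x then M else 0)
        (fun c' => by split_ifs <;> linarith)
      simp only [sum_one_add_ite] at hw
      rw [if_neg hxF₁, if_neg hxG₁, if_neg hx.2, if_pos hx.1] at hw
      rw [div_le_div_iff₀ (by linarith) (by linarith)] at hw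
      nlinarith [mul_le_mul_of_nonneg_right hn₁ (by linarith : (0:ℝ) ≤ (G₂.card : ℝ) + M)]
  · rintro (rfl | ⟨hFF, hGG⟩) <;> intro w hw
    · have hposG : (0 : ℝ) < ∑ c ∈ G₁, w c := Finset.sum_pos (fun c _ => hw c) hG₁.1
      have hposF₂ : (0 : ℝ) < ∑ c ∈ F₂, w c := Finset.sum_pos (fun c _ => hw c) hF₂.1
      rw [div_self (ne_of_gt hposF₂)]
      exact (div_le_one hposG).mpr
        (Finset.sum_le_sum_of_subset_of_nonneg h₁ (fun c _ _ => (hw c).le))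
    · have hposA : (0 : ℝ) < ∑ c ∈ G₁, w c := Finset.sum_pos (fun c _ => hw c) hG₁.1
      have hposB : (0 : ℝ) < ∑ c ∈ G₂, w c := Finset.sum_pos (fun c _ => hw c) hG₂.1
      have hposa : (0 : ℝ) < ∑ c ∈ F₁, w c := Finset.sum_pos (fun c _ => hw c) hF₁.1
      have hab : (∑ c ∈ F₁, w c) ≤ ∑ c ∈ F₂, w c :=
        Finset.sum_le_sum_of_subset_of_nonneg hFF (fun c _ _ => (hw c).le)
      have hbB : (∑ c ∈ F₂, w c) ≤ ∑ c ∈ G₂, w c :=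
        Finset.sum_le_sum_of_subset_of_nonneg h₂ (fun c _ _ => (hw c).le)
      have hdisj : Disjoint F₁ (G₂ \ F₂) :=
        Finset.disjoint_left.mpr (fun c hc hsd => (Finset.mem_sdiff.mp hsd).2 (hFF hc))
      have hsub : F₁ ∪ (G₂ \ F₂) ⊆ G₁ := Finset.union_subset h₁ hGG
      have hkey : (∑ c ∈ F₁, w c) + ((∑ c ∈ G₂, w c) - ∑ c ∈ F₂, w c) ≤ ∑ c ∈ G₁, w c := by
        rw [← Finset.sum_sdiff_eq_sub h₂, ← Finset.sum_union hdisj]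
        exact Finset.sum_le_sum_of_subset_of_nonneg hsub (fun c _ _ => (hw c).le)
      rw [div_le_div_iff₀ hposA hposB]
      nlinarith [mul_nonneg (by linarith : (0:ℝ) ≤ (∑ c ∈ G₂, w c) - ∑ c ∈ F₂, w c)
        (by linarith : (0:ℝ) ≤ (∑ c ∈ F₂, w c) - ∑ c ∈ F₁, w c),
        mul_le_mul_of_nonneg_left hkey (by linarith : (0:ℝ) ≤ ∑ c ∈ F₂, w c)]
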